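/- arXiv:1609.07301 — 2 statements merged into one kernel-verified Lean document; each statement's English description precedes it below -/
import Mathlib

section
/- For all natural numbers n, m with n > m ≥ 0, the second-order Eulerian numbers satisfy E₂(n,m) = ∑_{k=0}^{m} C(2n+1, k) · S(n+m+1-k, m+1-k) · (-1)^k. -/
/-- Unsigned Stirling numbers of the first kind. -/
def stirling1 : ℕ → ℕ → ℕ
  | 0, 0 => 1
  | 0, _ + 1 => 0
  | _ + 1, 0 => 0
  | n + 1, k + 1 => n * stirling1 n (k + 1) + stirling1 n k

/-- Stirling numbers of the second kind. -/
def stirling2 : ℕ → ℕ → ℕ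
  | 0, 0 => 1
  | 0, _ + 1 => 0
  | _ + 1, 0 => 0
  | n + 1, k + 1 => (k + 1) * stirling2 n (k + 1) + stirling2 n k

/-- First-order Eulerian numbers. -/
def eulerian : ℕ → ℕ → ℕ
  | 0, 0 => 1
  | 0, _ + 1 => 0
  | n + 1, 0 => eulerian n 0
  | n + 1, m + 1 => (m + 2) * eulerian n (m + 1) + (n - m) * eulerian n m

/-- Second-order Eulerian numbers. -/
def eulerian2 : ℕ → ℕ → ℕ
  | 0, 0 => 1
  | 0, _ + 1 => 0
  | n + 1, 0 => eulerian2 n 0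
  | n + 1, m + 1 => (m + 2) * eulerian2 n (m + 1) + (2 * n - m) * eulerian2 n m

lemma stirling2_eq_zero : ∀ n k : ℕ, n < k → stirling2 n k = 0
  | 0, _ + 1, _ => rfl
  | n + 1, k + 1, h => by
    rw [stirling2, stirling2_eq_zero n (k + 1) (by omega), stirling2_eq_zero n k (by omega)]
    simp

lemma stirling2_self : ∀ n : ℕ, stirling2 n n = 1
  | 0 => rfl
  | n + 1 => by
    rw [stirling2, stirling2_eq_zero n (n + 1) (by omega), stirling2_self n]
    simp

lemma eulerian2_zero : ∀ n : ℕ, eulerian2 n 0 = 1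
  | 0 => rfl
  | n + 1 => by rw [eulerian2, eulerian2_zero n]

lemma eulerian2_eq_zero : ∀ n m : ℕ, n ≤ m → eulerian2 n (m + 1) = 0
  | 0, _, _ => rfl
  | n + 1, 0, h => by omega
  | n + 1, m + 1, h => by
    rw [eulerian2, eulerian2_eq_zero n (m + 1) (by omega), eulerian2_eq_zero n m (by omega)]
    simp

lemma key_choose (n m k : ℕ) (hk : k ≤ n) :
    (k + 1) * Nat.choose (m + 2 * n + 2 - k) (2 * n + 1)
      + (2 * n - k) * Nat.choose (m + 2 * n + 1 - k) (2 * n + 1)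
      = (m + 2) * Nat.choose (m + 2 * n + 1 - k) (2 * n) := by
  rcases le_or_gt k (m + 1) with hkm | hkm
  · have h1 : m + 2 * n + 2 - k = (m + 2 * n + 1 - k) + 1 := by omega
    rw [h1, Nat.choose_succ_succ']
    have h2 := Nat.choose_succ_right_eq (m + 2 * n + 1 - k) (2 * n)
    have h3 : m + 2 * n + 1 - k - 2 * n = m + 1 - k := by omega
    rw [h3] at h2
    zify [hk, hkm, show k ≤ 2 * n by omega] at *
    linear_combination h2
  · have e1 : Nat.choose (m + 2 * n + 1 - k) (2 * n) = 0 :=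
      Nat.choose_eq_zero_of_lt (by omega)
    have e2 : Nat.choose (m + 2 * n + 1 - k) (2 * n + 1) = 0 :=
      Nat.choose_eq_zero_of_lt (by omega)
    have e3 : Nat.choose (m + 2 * n + 2 - k) (2 * n + 1) = 0 :=
      Nat.choose_eq_zero_of_lt (by omega)
    simp [e1, e2, e3]

lemma lemA : ∀ n m : ℕ, stirling2 (n + m + 1) (m + 1) =
    ∑ k ∈ Finset.range (n + 1), eulerian2 n k * Nat.choose (m + 2 * n - k) (2 * n) := by
  intro n
  induction n with
  | zero =>
    intro m
    simp [stirling2_self, eulerian2]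
  | succ n ihn =>
    intro m
    induction m with
    | zero =>
      have hL : stirling2 (n + 1 + 0 + 1) 1 = 1 := by
        clear ihn
        induction n with
        | zero => rfl
        | succ n ih =>
          rw [show n + 1 + 1 + 0 + 1 = (n + 1 + 0 + 1) + 1 by omega, stirling2, ih]
          simp [stirling2]
      rw [hL, Finset.sum_eq_single 0]
      · simp [eulerian2_zero]
      · intro k _ hk
        rw [Nat.choose_eq_zero_of_lt (by omega), mul_zero]
      · simp
    | succ m ihm =>
      -- LHS unfold
      rw [show n + 1 + (m + 1) + 1 = (n + m + 2) + 1 by omega, show m + 1 + 1 = (m + 1) + 1 from rfl,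
        stirling2]
      have hn : stirling2 (n + m + 2) (m + 2) =
          ∑ k ∈ Finset.range (n + 1), eulerian2 n k * Nat.choose (m + 1 + 2 * n - k) (2 * n) := by
        have := ihn (m + 1)
        rwa [show n + (m + 1) + 1 = n + m + 2 by omega] at this
      have hm : stirling2 (n + m + 2) (m + 1) =
          ∑ k ∈ Finset.range (n + 2), eulerian2 (n + 1) k * Nat.choose (m + 2 * (n + 1) - k) (2 * (n + 1)) := by
        have := ihm
        rwa [show n + 1 + m + 1 = n + m + 2 by omega] at this
      rw [hn, hm]
      -- expand LHS of goal
      have lhs_split :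
          ∑ k ∈ Finset.range (n + 2), eulerian2 (n + 1) k * Nat.choose (m + 1 + 2 * (n + 1) - k) (2 * (n + 1))
          = (∑ k ∈ Finset.range (n + 2), eulerian2 (n + 1) k * Nat.choose (m + 2 * n + 2 - k) (2 * n + 1))
            + ∑ k ∈ Finset.range (n + 2), eulerian2 (n + 1) k * Nat.choose (m + 2 * (n + 1) - k) (2 * (n + 1)) := by
        rw [← Finset.sum_add_distrib]
        apply Finset.sum_congr rfl
        intro k hk
        simp only [Finset.mem_range] at hk
        have e1 : m + 1 + 2 * (n + 1) - k = (m + 2 * n + 2 - k) + 1 := by omega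
        have e2 : 2 * (n + 1) = (2 * n + 1) + 1 := by omega
        have e3 : m + 2 * (n + 1) - k = m + 2 * n + 2 - k := by omega
        rw [e1, e2, Nat.choose_succ_succ',
          show m + (2 * n + 1 + 1) - k = m + 2 * n + 2 - k by omega]
        ring
      rw [lhs_split]
      have star :
          ∑ k ∈ Finset.range (n + 2), eulerian2 (n + 1) k * Nat.choose (m + 2 * n + 2 - k) (2 * n + 1)
          = (m + 1 + 1) * ∑ k ∈ Finset.range (n + 1), eulerian2 n k * Nat.choose (m + 1 + 2 * n - k) (2 * n) := by
        rw [Finset.sum_range_succ']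
        have step1 : ∀ k ∈ Finset.range (n + 1),
            eulerian2 (n + 1) (k + 1) * Nat.choose (m + 2 * n + 2 - (k + 1)) (2 * n + 1)
            = (k + 2) * (eulerian2 n (k + 1) * Nat.choose (m + 2 * n + 1 - k) (2 * n + 1))
              + (2 * n - k) * (eulerian2 n k * Nat.choose (m + 2 * n + 1 - k) (2 * n + 1)) := by
          intro k hk
          rw [eulerian2, show m + 2 * n + 2 - (k + 1) = m + 2 * n + 1 - k by omega]
          ring
        rw [Finset.sum_congr rfl step1, Finset.sum_add_distrib]
        have hAC :
            (∑ k ∈ Finset.range (n + 1),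
              (k + 2) * (eulerian2 n (k + 1) * Nat.choose (m + 2 * n + 1 - k) (2 * n + 1)))
              + eulerian2 (n + 1) 0 * Nat.choose (m + 2 * n + 2 - 0) (2 * n + 1)
            = ∑ k ∈ Finset.range (n + 1),
                (k + 1) * (eulerian2 n k * Nat.choose (m + 2 * n + 2 - k) (2 * n + 1)) := by
          have h0 : ∑ k ∈ Finset.range (n + 2),
              (k + 1) * (eulerian2 n k * Nat.choose (m + 2 * n + 2 - k) (2 * n + 1))
              = ∑ k ∈ Finset.range (n + 1),
                  (k + 2) * (eulerian2 n (k + 1) * Nat.choose (m + 2 * n + 1 - k) (2 * n + 1))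
                + eulerian2 (n + 1) 0 * Nat.choose (m + 2 * n + 2 - 0) (2 * n + 1) := by
            rw [Finset.sum_range_succ']
            congr 1
            · apply Finset.sum_congr rfl
              intro k hk
              rw [show m + 2 * n + 2 - (k + 1) = m + 2 * n + 1 - k by omega]
            · show 1 * (eulerian2 n 0 * _) = _
              rw [one_mul, show eulerian2 (n + 1) 0 = eulerian2 n 0 from rfl]
          rw [← h0, Finset.sum_range_succ, eulerian2_eq_zero n n le_rfl]
          simp
        rw [add_right_comm, hAC, ← Finset.sum_add_distrib, Finset.mul_sum]
        apply Finset.sum_congr rfl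
        intro k hk
        simp only [Finset.mem_range] at hk
        have hkc := key_choose n m k (by omega)
        rw [show m + 1 + 2 * n - k = m + 2 * n + 1 - k by omega]
        calc (k + 1) * (eulerian2 n k * Nat.choose (m + 2 * n + 2 - k) (2 * n + 1))
              + (2 * n - k) * (eulerian2 n k * Nat.choose (m + 2 * n + 1 - k) (2 * n + 1))
            = eulerian2 n k * ((k + 1) * Nat.choose (m + 2 * n + 2 - k) (2 * n + 1)
                + (2 * n - k) * Nat.choose (m + 2 * n + 1 - k) (2 * n + 1)) := by ring
          _ = eulerian2 n k * ((m + 2) * Nat.choose (m + 2 * n + 1 - k) (2 * n)) := by rw [hkc]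
          _ = (m + 1 + 1) * (eulerian2 n k * Nat.choose (m + 2 * n + 1 - k) (2 * n)) := by ring
      rw [star]


open PowerSeries in
lemma coeff_one_sub_pow (r k : ℕ) :
    (PowerSeries.coeff (R := ℤ) k) ((1 - PowerSeries.X) ^ r) = (-1) ^ k * (r.choose k) := by
  have h : (1 - PowerSeries.X : PowerSeries ℤ) ^ r
      = ∑ i ∈ Finset.range (r + 1),
          PowerSeries.C (R := ℤ) ((-1) ^ i * (r.choose i)) * PowerSeries.X ^ i := by
    rw [sub_eq_add_neg, add_comm, add_pow]
    apply Finset.sum_congr rfl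
    intro i _
    rw [neg_pow, map_mul, map_pow, map_neg, map_one, map_natCast]
    ring
  rw [h, map_sum]
  rw [Finset.sum_eq_single k]
  · rw [PowerSeries.coeff_C_mul, PowerSeries.coeff_X_pow, if_pos rfl, mul_one]
  · intro i _ hik
    rw [PowerSeries.coeff_C_mul, PowerSeries.coeff_X_pow, if_neg (Ne.symm hik), mul_zero]
  · intro hk
    have : r < k := by simpa using hk
    rw [Nat.choose_eq_zero_of_lt this]
    simp

lemma lemB (r d : ℕ) (hd : 1 ≤ d) :
    ∑ k ∈ Finset.range (d + 1), (-1 : ℤ) ^ k * ((r + 1).choose k) * ((r + d - k).choose r) = 0 := by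
  have h := PowerSeries.mk_add_choose_mul_one_sub_pow_eq_one (S := ℤ) (d := r)
  have h2 := congrArg (PowerSeries.coeff (R := ℤ) d) h
  rw [PowerSeries.coeff_mul, PowerSeries.coeff_one, if_neg (by omega)] at h2
  rw [Finset.Nat.sum_antidiagonal_eq_sum_range_succ
      (f := fun i j => (PowerSeries.coeff (R := ℤ) i) (PowerSeries.mk fun n => (Nat.choose (r + n) r : ℤ))
        * (PowerSeries.coeff (R := ℤ) j) ((1 - PowerSeries.X) ^ (r + 1)))] at h2
  simp only [PowerSeries.coeff_mk, coeff_one_sub_pow] at h2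
  rw [← Finset.sum_range_reflect] at h2
  rw [← h2]
  apply Finset.sum_congr rfl
  intro k hk
  simp only [Finset.mem_range] at hk
  have h1 : d + 1 - 1 - k = d - k := by omega
  have h3 : d - (d - k) = k := by omega
  have h4 : r + (d - k) = r + d - k := by omega
  rw [h1, h3, h4]
  ring


theorem eulerian2_stirling2_identity (n m : ℕ) (h : m < n) :
    (eulerian2 n m : ℤ) =
      ∑ k ∈ Finset.range (m + 1),
        ((2 * n + 1).choose k : ℤ) * (stirling2 (n + m + 1 - k) (m + 1 - k) : ℤ) *
          (-1 : ℤ) ^ k := by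
  have hstep : ∀ k ∈ Finset.range (m + 1),
      ((2 * n + 1).choose k : ℤ) * (stirling2 (n + m + 1 - k) (m + 1 - k) : ℤ) * (-1) ^ k
      = ∑ j ∈ Finset.range (n + 1),
          (eulerian2 n j : ℤ) *
            ((-1) ^ k * ((2 * n + 1).choose k : ℤ) * ((m - k + 2 * n - j).choose (2 * n) : ℤ)) := by
    intro k hk
    simp only [Finset.mem_range] at hk
    have e1 : n + m + 1 - k = n + (m - k) + 1 := by omega
    have e2 : m + 1 - k = (m - k) + 1 := by omega
    rw [e1, e2, lemA n (m - k)]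
    push_cast [Finset.mul_sum, Finset.sum_mul]
    apply Finset.sum_congr rfl
    intro j _
    ring
  rw [Finset.sum_congr rfl hstep, Finset.sum_comm]
  have inner : ∀ j ∈ Finset.range (n + 1),
      (∑ k ∈ Finset.range (m + 1),
        (eulerian2 n j : ℤ) *
          ((-1) ^ k * ((2 * n + 1).choose k : ℤ) * ((m - k + 2 * n - j).choose (2 * n) : ℤ)))
      = if j = m then (eulerian2 n j : ℤ) else 0 := by
    intro j hj
    simp only [Finset.mem_range] at hj
    rw [← Finset.mul_sum]
    rcases lt_trichotomy j m with hlt | heq | hgt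
    · rw [if_neg (by omega)]
      have hz0 : ∑ k ∈ Finset.range (m - j + 1),
          (-1 : ℤ) ^ k * ((2 * n + 1).choose k : ℤ) * ((m - k + 2 * n - j).choose (2 * n) : ℤ)
          = 0 := by
        have hB := lemB (2 * n) (m - j) (by omega)
        rw [← hB]
        apply Finset.sum_congr rfl
        intro k hk
        simp only [Finset.mem_range] at hk
        rw [show m - k + 2 * n - j = 2 * n + (m - j) - k by omega]
      have hsub : Finset.range (m - j + 1) ⊆ Finset.range (m + 1) :=
        Finset.range_subset_range.mpr (by omega)
      have hzero : ∀ k ∈ Finset.range (m + 1), k ∉ Finset.range (m - j + 1) →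
          (-1 : ℤ) ^ k * ((2 * n + 1).choose k : ℤ) * ((m - k + 2 * n - j).choose (2 * n) : ℤ)
            = 0 := by
        intro k hk1 hk2
        simp only [Finset.mem_range] at hk1 hk2
        have hc : m - k + 2 * n - j < 2 * n := by omega
        rw [Nat.choose_eq_zero_of_lt hc]
        simp
      rw [← Finset.sum_subset hsub hzero, hz0, mul_zero]
    · rw [if_pos heq, heq]
      have hz1 : ∑ k ∈ Finset.range (m + 1),
          (-1 : ℤ) ^ k * ((2 * n + 1).choose k : ℤ) * ((m - k + 2 * n - m).choose (2 * n) : ℤ)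
          = 1 := by
        rw [Finset.sum_eq_single 0]
        · rw [show m - 0 + 2 * n - m = 2 * n by omega]
          simp
        · intro k hk hk0
          simp only [Finset.mem_range] at hk
          rw [Nat.choose_eq_zero_of_lt (show m - k + 2 * n - m < 2 * n by omega)]
          simp
        · simp
      rw [hz1, mul_one]
    · rw [if_neg (by omega)]
      have hz2 : ∑ k ∈ Finset.range (m + 1),
          (-1 : ℤ) ^ k * ((2 * n + 1).choose k : ℤ) * ((m - k + 2 * n - j).choose (2 * n) : ℤ)
          = 0 := by
        apply Finset.sum_eq_zero
        intro k hk
        simp only [Finset.mem_range] at hk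
        have hc : m - k + 2 * n - j < 2 * n := by omega
        rw [Nat.choose_eq_zero_of_lt hc]
        simp
      rw [hz2, mul_zero]
  rw [Finset.sum_congr rfl inner, Finset.sum_ite_eq' (Finset.range (n + 1)) m
    (fun j => (eulerian2 n j : ℤ)), if_pos (Finset.mem_range.mpr (by omega))]
end

section
/- For all real numbers x and t, ∑_{n=0}^∞ (∑_{k=0}^{n} S(n,k) · x^k) · t^n/n! = exp(x·(e^t - 1)), where the series on the left converges for all real x and t. -/
open Finset

lemma stirling2_eq_zero_of_lt : ∀ {n k : ℕ}, n < k → stirling2 n k = 0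
  | 0, 0, h => absurd h (lt_irrefl 0)
  | 0, _ + 1, _ => rfl
  | n + 1, 0, h => by omega
  | n + 1, k + 1, h => by
      rw [stirling2, stirling2_eq_zero_of_lt (show n < k + 1 by omega),
        stirling2_eq_zero_of_lt (show n < k by omega)]
      simp

lemma ssum_eq (n k : ℕ) :
    ∑ j ∈ range (k + 1), (-1 : ℝ) ^ j * (k.choose j) * (j : ℝ) ^ n
      = (-1 : ℝ) ^ k * (k.factorial) * (stirling2 n k) := by
  induction n generalizing k with
  | zero =>
    have h : ∑ j ∈ range (k + 1), (-1 : ℝ) ^ j * (k.choose j) * (j : ℝ) ^ 0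
        = (((∑ m ∈ range (k + 1), ((-1) ^ m * k.choose m : ℤ)) : ℤ) : ℝ) := by
      push_cast; simp
    rw [h, Int.alternating_sum_range_choose]
    cases k <;> simp [stirling2]
  | succ n ih =>
    cases k with
    | zero => simp [stirling2]
    | succ k =>
      have hA : ∀ m : ℕ,
          ∑ j ∈ range (k + 2), (-1 : ℝ) ^ j * ((k + 1).choose j) * (j : ℝ) ^ m
            = ∑ i ∈ range (k + 1),
                (-1 : ℝ) ^ (i + 1) * ((k + 1).choose (i + 1)) * ((i : ℝ) + 1) ^ m
              + (0 : ℝ) ^ m := by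
        intro m
        rw [Finset.sum_range_succ']
        simp
      -- LHS computation
      have key : ∀ i : ℕ, ((k + 1).choose (i + 1) : ℝ) * ((i : ℝ) + 1)
          = (k + 1) * (k.choose i) := by
        intro i
        have := Nat.add_one_mul_choose_eq k i
        have h2 : ((k + 1) * k.choose i : ℕ) = ((k + 1).choose (i + 1) * (i + 1) : ℕ) := this
        exact_mod_cast h2.symm
      set A : ℝ := ∑ i ∈ range (k + 1), (-1 : ℝ) ^ i * (k.choose i) * ((i : ℝ) + 1) ^ n with hAdef
      have hLHS : ∑ j ∈ range (k + 2), (-1 : ℝ) ^ j * ((k + 1).choose j) * (j : ℝ) ^ (n + 1)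
          = -((k : ℝ) + 1) * A := by
        rw [hA (n + 1), zero_pow (Nat.succ_ne_zero n), add_zero, hAdef, Finset.mul_sum]
        refine Finset.sum_congr rfl fun i _ => ?_
        have : ((i : ℝ) + 1) ^ (n + 1) = ((i : ℝ) + 1) ^ n * ((i : ℝ) + 1) := by ring
        rw [this]
        have hk := key i
        calc (-1 : ℝ) ^ (i + 1) * ((k + 1).choose (i + 1)) * (((i : ℝ) + 1) ^ n * ((i : ℝ) + 1))
            = (-1 : ℝ) ^ (i + 1) * (((k + 1).choose (i + 1) : ℝ) * ((i : ℝ) + 1)) * ((i : ℝ) + 1) ^ n := by ring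
          _ = (-1 : ℝ) ^ (i + 1) * (((k : ℝ) + 1) * (k.choose i)) * ((i : ℝ) + 1) ^ n := by rw [hk]
          _ = -((k : ℝ) + 1) * ((-1 : ℝ) ^ i * (k.choose i) * ((i : ℝ) + 1) ^ n) := by
              rw [pow_succ]; ring
      -- A = S_sum(k,n) - S_sum(k+1,n)
      have hB : ∑ i ∈ range (k + 1), (-1 : ℝ) ^ (i + 1) * (k.choose (i + 1)) * ((i : ℝ) + 1) ^ n
          = ∑ i ∈ range k, (-1 : ℝ) ^ (i + 1) * (k.choose (i + 1)) * ((i : ℝ) + 1) ^ n := by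
        rw [Finset.sum_range_succ, Nat.choose_succ_self]
        simp
      have hSk : ∑ j ∈ range (k + 1), (-1 : ℝ) ^ j * (k.choose j) * (j : ℝ) ^ n
          = ∑ i ∈ range k, (-1 : ℝ) ^ (i + 1) * (k.choose (i + 1)) * ((i : ℝ) + 1) ^ n
            + (0 : ℝ) ^ n := by
        rw [Finset.sum_range_succ']
        simp
      have hSk1 : ∑ j ∈ range (k + 2), (-1 : ℝ) ^ j * ((k + 1).choose j) * (j : ℝ) ^ n
          = -A + (∑ i ∈ range k, (-1 : ℝ) ^ (i + 1) * (k.choose (i + 1)) * ((i : ℝ) + 1) ^ n)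
            + (0 : ℝ) ^ n := by
        rw [hA n, ← hB]
        have : ∑ i ∈ range (k + 1),
            (-1 : ℝ) ^ (i + 1) * ((k + 1).choose (i + 1)) * ((i : ℝ) + 1) ^ n
          = ∑ i ∈ range (k + 1),
              ((-1 : ℝ) ^ (i + 1) * (k.choose i) * ((i : ℝ) + 1) ^ n
               + (-1 : ℝ) ^ (i + 1) * (k.choose (i + 1)) * ((i : ℝ) + 1) ^ n) := by
          refine Finset.sum_congr rfl fun i _ => ?_
          rw [Nat.choose_succ_succ]
          push_cast
          ring
        rw [this, Finset.sum_add_distrib, hAdef]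
        have : ∑ i ∈ range (k + 1), (-1 : ℝ) ^ (i + 1) * (k.choose i) * ((i : ℝ) + 1) ^ n
            = -∑ i ∈ range (k + 1), (-1 : ℝ) ^ i * (k.choose i) * ((i : ℝ) + 1) ^ n := by
          rw [← Finset.sum_neg_distrib]
          refine Finset.sum_congr rfl fun i _ => ?_
          rw [pow_succ]; ring
        rw [this]
      -- combine
      rw [hLHS]
      have e1 := ih k
      have e2 := ih (k + 1)
      have hAval : A = ((-1 : ℝ) ^ k * (k.factorial) * (stirling2 n k))
          - ((-1 : ℝ) ^ (k + 1) * ((k + 1).factorial) * (stirling2 n (k + 1))) := by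
        have := hSk1
        rw [e2] at this
        have h2 := hSk
        rw [e1] at h2
        linarith [this, h2]
      rw [hAval, stirling2]
      push_cast [Nat.factorial_succ, pow_succ]
      ring

lemma hasSum_stirling_fact (k : ℕ) (t : ℝ) :
    HasSum (fun n : ℕ => ((k.factorial : ℝ) * stirling2 n k) * t ^ n / n.factorial)
      ((Real.exp t - 1) ^ k) := by
  have h : ∀ j : ℕ,
      HasSum (fun n : ℕ => (-1 : ℝ) ^ j * (k.choose j) * (((j : ℝ) * t) ^ n / n.factorial))
        ((-1 : ℝ) ^ j * (k.choose j) * Real.exp ((j : ℝ) * t)) := by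
    intro j
    have h0 := NormedSpace.expSeries_div_hasSum_exp ((j : ℝ) * t)
    rw [← Real.exp_eq_exp_ℝ] at h0
    exact h0.mul_left _
  have hsum := hasSum_sum (s := range (k + 1)) (fun j _ => h j)
  have hval : ∑ j ∈ range (k + 1), (-1 : ℝ) ^ j * (k.choose j) * Real.exp ((j : ℝ) * t)
      = (1 - Real.exp t) ^ k := by
    have hb := add_pow (-Real.exp t) 1 k
    rw [show -Real.exp t + 1 = 1 - Real.exp t by ring] at hb
    rw [hb]
    refine Finset.sum_congr rfl fun j _ => ?_
    rw [Real.exp_nat_mul, neg_pow]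
    ring
  rw [hval] at hsum
  have hfun : (fun n : ℕ => ∑ j ∈ range (k + 1),
        (-1 : ℝ) ^ j * (k.choose j) * (((j : ℝ) * t) ^ n / n.factorial))
      = fun n : ℕ => ((-1 : ℝ) ^ k * k.factorial * stirling2 n k) * t ^ n / n.factorial := by
    funext n
    rw [← ssum_eq n k, Finset.sum_mul, Finset.sum_div]
    refine Finset.sum_congr rfl fun j _ => ?_
    rw [mul_pow]
    ring
  rw [hfun] at hsum
  have h2 := hsum.mul_left ((-1 : ℝ) ^ k)
  have e1 : (fun n : ℕ => (-1 : ℝ) ^ k * (((-1 : ℝ) ^ k * k.factorial * stirling2 n k) * t ^ n / n.factorial))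
      = fun n : ℕ => ((k.factorial : ℝ) * stirling2 n k) * t ^ n / n.factorial := by
    funext n
    have h1 : (-1 : ℝ) ^ k * (-1 : ℝ) ^ k = 1 := by rw [← mul_pow]; norm_num
    linear_combination ((k.factorial : ℝ) * (stirling2 n k) * t ^ n / (n.factorial : ℝ)) * h1
  have e2 : (-1 : ℝ) ^ k * (1 - Real.exp t) ^ k = (Real.exp t - 1) ^ k := by
    rw [← mul_pow, show (-1 : ℝ) * (1 - Real.exp t) = Real.exp t - 1 by ring]
  rw [e1, e2] at h2
  exact h2

lemma hasSum_stirling (k : ℕ) (t : ℝ) :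
    HasSum (fun n : ℕ => (stirling2 n k : ℝ) * t ^ n / n.factorial)
      ((Real.exp t - 1) ^ k / k.factorial) := by
  have h := (hasSum_stirling_fact k t).div_const (k.factorial : ℝ)
  have e : (fun n : ℕ => ((k.factorial : ℝ) * stirling2 n k) * t ^ n / n.factorial / k.factorial)
      = fun n : ℕ => (stirling2 n k : ℝ) * t ^ n / n.factorial := by
    funext n
    have hk : (k.factorial : ℝ) ≠ 0 := Nat.cast_ne_zero.2 (Nat.factorial_ne_zero k)
    field_simp
  rwa [e] at h

theorem bell_polynomial_egf (x t : ℝ) :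
    HasSum (fun n : ℕ =>
        (∑ k ∈ Finset.range (n + 1), (stirling2 n k : ℝ) * x ^ k) * t ^ n / (n.factorial : ℝ))
      (Real.exp (x * (Real.exp t - 1))) := by
  set F : ℕ × ℕ → ℝ :=
    fun p => (stirling2 p.2 p.1 : ℝ) * x ^ p.1 * t ^ p.2 / (p.2.factorial : ℝ) with hF
  -- fibers along k
  have fibk : ∀ k : ℕ, HasSum (fun n => F (k, n))
      (x ^ k * ((Real.exp t - 1) ^ k / k.factorial)) := by
    intro k
    have h := (hasSum_stirling k t).mul_left (x ^ k)
    have e : (fun n : ℕ => x ^ k * ((stirling2 n k : ℝ) * t ^ n / n.factorial))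
        = fun n => F (k, n) := by
      funext n; simp only [hF]; ring
    rwa [e] at h
  -- absolute summability
  have habs : Summable fun p : ℕ × ℕ => |F p| := by
    have habs_eq : ∀ p : ℕ × ℕ,
        |F p| = (stirling2 p.2 p.1 : ℝ) * |x| ^ p.1 * |t| ^ p.2 / (p.2.factorial : ℝ) := by
      intro p
      rw [hF, abs_div, abs_mul, abs_mul, abs_pow, abs_pow, Nat.abs_cast, Nat.abs_cast]
    have key : Summable fun p : ℕ × ℕ =>
        (stirling2 p.2 p.1 : ℝ) * |x| ^ p.1 * |t| ^ p.2 / (p.2.factorial : ℝ) := by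
      rw [summable_prod_of_nonneg (by
        intro p
        have := Nat.cast_pos (α := ℝ) |>.2 (Nat.factorial_pos p.2)
        positivity)]
      constructor
      · intro k
        have h := (hasSum_stirling k |t|).mul_left (|x| ^ k)
        refine h.summable.congr fun n => ?_
        ring
      · have htsum : ∀ k : ℕ, ∑' n : ℕ,
            (stirling2 n k : ℝ) * |x| ^ k * |t| ^ n / (n.factorial : ℝ)
            = |x| ^ k * ((Real.exp |t| - 1) ^ k / k.factorial) := by
          intro k
          have h := (hasSum_stirling k |t|).mul_left (|x| ^ k)
          have e : (fun n : ℕ => |x| ^ k * ((stirling2 n k : ℝ) * |t| ^ n / n.factorial))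
              = fun n : ℕ => (stirling2 n k : ℝ) * |x| ^ k * |t| ^ n / (n.factorial : ℝ) := by
            funext n; ring
          rw [e] at h
          exact h.tsum_eq
        simp only [htsum]
        have hsummable := NormedSpace.expSeries_div_summable (|x| * (Real.exp |t| - 1))
        refine hsummable.congr fun k => ?_
        rw [mul_pow, mul_div_assoc]
    refine key.congr fun p => (habs_eq p).symm
  have hFsum : Summable F := habs.of_abs
  have hF1 : HasSum F (∑' p, F p) := hFsum.hasSum
  have h1 : HasSum (fun k : ℕ => x ^ k * ((Real.exp t - 1) ^ k / k.factorial)) (∑' p, F p) :=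
    hF1.prod_fiberwise fibk
  have h2 : HasSum (fun k : ℕ => x ^ k * ((Real.exp t - 1) ^ k / k.factorial))
      (Real.exp (x * (Real.exp t - 1))) := by
    have h0 := NormedSpace.expSeries_div_hasSum_exp (x * (Real.exp t - 1))
    rw [← Real.exp_eq_exp_ℝ] at h0
    have e : (fun k : ℕ => (x * (Real.exp t - 1)) ^ k / (k.factorial : ℝ))
        = fun k : ℕ => x ^ k * ((Real.exp t - 1) ^ k / k.factorial) := by
      funext k; rw [mul_pow, mul_div_assoc]
    rwa [e] at h0
  have hSval : (∑' p, F p) = Real.exp (x * (Real.exp t - 1)) := h1.unique h2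
  have hswap : HasSum (fun p : ℕ × ℕ => F (p.2, p.1)) (∑' p, F p) :=
    (Equiv.prodComm ℕ ℕ).hasSum_iff.2 hF1
  have fibn : ∀ n : ℕ, HasSum (fun k => F (k, n))
      ((∑ k ∈ Finset.range (n + 1), (stirling2 n k : ℝ) * x ^ k) * t ^ n / (n.factorial : ℝ)) := by
    intro n
    have hz : ∀ k ∉ Finset.range (n + 1), F (k, n) = 0 := by
      intro k hk
      rw [Finset.mem_range, not_lt] at hk
      have h0 : stirling2 n k = 0 := stirling2_eq_zero_of_lt (by omega)
      simp [hF, h0]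
    have h := hasSum_sum_of_ne_finset_zero (L := SummationFilter.unconditional ℕ) hz
    convert h using 1
    rw [Finset.sum_mul, Finset.sum_div]
  have hgoal := hswap.prod_fiberwise fibn
  rwa [hSval] at hgoal
end
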